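/- Let B be the ball algebra on the closed unit ball of ℂ^d, and let J ⊆ B be a closed homogeneous ideal. Then there exists N ∈ ℕ such that f^N ∈ J for every f ∈ √J (i.e., for every f ∈ B with f^m ∈ J for some m ≥ 1). -/

import Mathlib

open MvPolynomial Metric
noncomputable section


open MvPolynomial Metric

noncomputable section

abbrev Cd (d : ℕ) := EuclideanSpace ℂ (Fin d)

abbrev CBall (d : ℕ) : Set (Cd d) := Metric.closedBall (0 : Cd d) 1

instance (d : ℕ) : CompactSpace (CBall d) :=
  isCompact_iff_compactSpace.mp (isCompact_closedBall _ _)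

/-- The `i`-th coordinate function on the closed unit ball. -/
def coordFn (d : ℕ) (i : Fin d) : C(CBall d, ℂ) :=
  ⟨fun z => (z : Cd d) i, by fun_prop⟩

/-- Restriction of a polynomial to the closed unit ball, as an element of
`C(closedBall, ℂ)`. -/
def polyMap (d : ℕ) : MvPolynomial (Fin d) ℂ →ₐ[ℂ] C(CBall d, ℂ) :=
  aeval (coordFn d)

/-- The ball algebra: the closure, in the Banach algebra of continuous functions on
the closed unit ball of ℂ^d with the supremum norm, of the restrictions of
polynomials. -/
def ballAlg (d : ℕ) : Set C(CBall d, ℂ) := closure (Set.range (polyMap d))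

/-- `J` is an ideal of the ball algebra `B`. -/
def IsIdealOfBallAlg (d : ℕ) (J : Set C(CBall d, ℂ)) : Prop :=
  J ⊆ ballAlg d ∧ (0 : C(CBall d, ℂ)) ∈ J ∧
    (∀ f ∈ J, ∀ g ∈ J, f + g ∈ J) ∧ (∀ f ∈ J, ∀ g ∈ ballAlg d, g * f ∈ J)

/-- The self-map of the closed ball given by `z ↦ t z` for `‖t‖ ≤ 1`. -/
def dilatePt (d : ℕ) (t : ℂ) (ht : ‖t‖ ≤ 1) : C(CBall d, CBall d) :=
  ⟨fun z => ⟨t • (z : Cd d), by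
      have hz : ‖(z : Cd d)‖ ≤ 1 := mem_closedBall_zero_iff.mp z.2
      show t • (z : Cd d) ∈ Metric.closedBall 0 1
      rw [mem_closedBall_zero_iff, norm_smul]
      exact mul_le_one₀ ht (norm_nonneg _) hz⟩,
    by exact Continuous.subtype_mk (continuous_subtype_val.const_smul t) _⟩

/-- The dilation `f ↦ (z ↦ f (t z))` on continuous functions on the closed ball. -/
def dilateFn (d : ℕ) (t : ℂ) (ht : ‖t‖ ≤ 1) (f : C(CBall d, ℂ)) : C(CBall d, ℂ) :=
  f.comp (dilatePt d t ht)

/-- A closed ideal of the ball algebra is homogeneous if it is invariant under all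
dilations `z ↦ t z`, `|t| < 1`. -/
def IsHomogBallIdeal (d : ℕ) (J : Set C(CBall d, ℂ)) : Prop :=
  ∀ f ∈ J, ∀ t : ℂ, ∀ ht : ‖t‖ < 1, dilateFn d t ht.le f ∈ J

namespace Stmt11
variable {d : ℕ}

lemma polyMap_apply (p : MvPolynomial (Fin d) ℂ) (z : CBall d) :
    polyMap d p z = eval (fun i => (z : Cd d) i) p := by
  induction p using MvPolynomial.induction_on with
  | C a => rw [polyMap, aeval_C, eval_C]; rfl
  | add p q hp hq => simp [map_add, hp, hq]
  | mul_X p i hp =>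
      rw [map_mul, ContinuousMap.mul_apply, hp, eval_mul, eval_X]
      congr 1
      show polyMap d (X i) z = _
      rw [polyMap, aeval_X]
      rfl

lemma eval_smul_of_isHomogeneous {p : MvPolynomial (Fin d) ℂ} {k : ℕ}
    (hp : p.IsHomogeneous k) (t : ℂ) (x : Fin d → ℂ) :
    eval (t • x) p = t ^ k * eval x p := by
  rw [eval_eq, eval_eq, Finset.mul_sum]
  refine Finset.sum_congr rfl fun m hm => ?_
  have hdeg : ∑ i ∈ m.support, m i = k := by
    have h1 := hp (mem_support_iff.mp hm)
    rw [show (1 : Fin d → ℕ) = fun _ => 1 from rfl, ← Finsupp.degree_eq_weight_one] at h1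
    exact h1
  have : ∏ i ∈ m.support, (t • x) i ^ m i
      = t ^ k * ∏ i ∈ m.support, x i ^ m i := by
    rw [← hdeg]
    rw [← Finset.prod_pow_eq_pow_sum, ← Finset.prod_mul_distrib]
    refine Finset.prod_congr rfl fun i _ => ?_
    simp [mul_pow]
  rw [this]; ring


lemma dilateFn_apply (t : ℂ) (ht : ‖t‖ ≤ 1) (g : C(CBall d, ℂ)) (z : CBall d) :
    dilateFn d t ht g z = g (dilatePt d t ht z) := rfl

lemma dilateFn_sub (t : ℂ) (ht : ‖t‖ ≤ 1) (g h : C(CBall d, ℂ)) :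
    dilateFn d t ht (g - h) = dilateFn d t ht g - dilateFn d t ht h := by
  ext z; simp [dilateFn_apply]

lemma norm_dilateFn_le (t : ℂ) (ht : ‖t‖ ≤ 1) (g : C(CBall d, ℂ)) :
    ‖dilateFn d t ht g‖ ≤ ‖g‖ := by
  refine (ContinuousMap.norm_le _ (norm_nonneg g)).mpr fun z => ?_
  exact g.norm_coe_le_norm _

lemma dilateFn_eq_algHom (t : ℂ) (ht : ‖t‖ ≤ 1) :
    dilateFn d t ht = ⇑(ContinuousMap.compRightAlgHom ℂ ℂ (dilatePt d t ht)) := rfl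

lemma dilateFn_polyMap_homog {q : MvPolynomial (Fin d) ℂ} {k : ℕ}
    (hq : q.IsHomogeneous k) (t : ℂ) (ht : ‖t‖ ≤ 1) :
    dilateFn d t ht (polyMap d q) = t ^ k • polyMap d q := by
  ext z
  rw [dilateFn_apply, ContinuousMap.smul_apply, polyMap_apply, polyMap_apply, smul_eq_mul]
  have hc : (fun i => ((dilatePt d t ht z : CBall d) : Cd d) i)
      = t • fun i => (z : Cd d) i := rfl
  rw [hc, eval_smul_of_isHomogeneous hq]

lemma dilate_polyMap_expand (p : MvPolynomial (Fin d) ℂ) (t : ℂ) (ht : ‖t‖ ≤ 1)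
    {n : ℕ} (hn : p.totalDegree < n) :
    dilateFn d t ht (polyMap d p)
      = ∑ l ∈ Finset.range n, t ^ l • polyMap d (homogeneousComponent l p) := by
  have h2 : ∑ l ∈ Finset.range (p.totalDegree + 1), homogeneousComponent l p
      = ∑ l ∈ Finset.range n, homogeneousComponent l p := by
    refine Finset.sum_subset (Finset.range_subset_range.mpr hn) fun l hl hl2 => ?_
    refine homogeneousComponent_eq_zero _ p ?_
    simp only [Finset.mem_range, not_lt] at hl2 ⊢
    omega
  have hp : ∑ l ∈ Finset.range n, homogeneousComponent l p = p :=
    h2.symm.trans (sum_homogeneousComponent p)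
  conv_lhs => rw [← hp]
  rw [map_sum, dilateFn_eq_algHom, map_sum]
  refine Finset.sum_congr rfl fun l _ => ?_
  rw [← dilateFn_eq_algHom, dilateFn_polyMap_homog (homogeneousComponent_isHomogeneous l p)]


/-! ### Roots of unity and averaging -/

def zeta (m : ℕ) : ℂ := Complex.exp ((2 * Real.pi / m : ℝ) * Complex.I)

lemma zeta_ne_zero (m : ℕ) : zeta m ≠ 0 := Complex.exp_ne_zero _

lemma norm_zeta_pow (m j : ℕ) : ‖zeta m ^ j‖ = 1 := by
  rw [norm_pow, zeta, Complex.norm_exp_ofReal_mul_I, one_pow]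

lemma zeta_pow_m (m : ℕ) (hm : 0 < m) : zeta m ^ m = 1 := by
  rw [zeta, ← Complex.exp_nat_mul]
  have hm' : (m : ℂ) ≠ 0 := by exact_mod_cast hm.ne'
  have h2 : (m : ℂ) * (((2 * Real.pi / m : ℝ) : ℂ) * Complex.I)
      = 2 * (Real.pi : ℂ) * Complex.I := by
    push_cast
    field_simp
  rw [h2, Complex.exp_two_pi_mul_I]

lemma zeta_zpow_ne_one (m : ℕ) (hm : 0 < m) (s : ℤ) (hs : ¬ (m : ℤ) ∣ s) :
    zeta m ^ s ≠ 1 := by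
  intro h
  rw [zeta, ← Complex.exp_int_mul, Complex.exp_eq_one_iff] at h
  obtain ⟨n, hn⟩ := h
  apply hs
  have hm' : (m : ℝ) ≠ 0 := by positivity
  have h2 : (((s * (2 * Real.pi / m) : ℝ)) : ℂ) * Complex.I
      = (((n * (2 * Real.pi) : ℝ)) : ℂ) * Complex.I := by
    push_cast
    push_cast at hn
    linear_combination hn
  have h3 : (s : ℝ) * (2 * Real.pi / m) = n * (2 * Real.pi) := by
    have := mul_right_cancel₀ Complex.I_ne_zero h2
    exact_mod_cast this
  have h4 : (s : ℝ) = n * m := by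
    field_simp at h3
    have key : ((s : ℝ) - (n : ℝ) * m) * (2 * Real.pi) = 0 := by linear_combination (2 * Real.pi) * h3
    have h2pi : (2 * Real.pi) ≠ 0 := by positivity
    rcases mul_eq_zero.mp key with h | h
    · linarith
    · exact absurd h h2pi
  refine ⟨n, ?_⟩
  have : (s : ℝ) = ((m * n : ℤ) : ℝ) := by push_cast; linarith [h4]
  exact_mod_cast this

def cpt (m j : ℕ) (r : ℝ) : ℂ := (r : ℂ) * zeta m ^ j

lemma norm_cpt (m j : ℕ) {r : ℝ} (h0 : 0 ≤ r) : ‖cpt m j r‖ = r := by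
  rw [cpt, norm_mul, norm_zeta_pow, mul_one, Complex.norm_real, Real.norm_of_nonneg h0]

lemma cpt_ne_zero (m j : ℕ) {r : ℝ} (h0 : 0 < r) : cpt m j r ≠ 0 :=
  mul_ne_zero (by exact_mod_cast h0.ne') (pow_ne_zero _ (zeta_ne_zero m))

lemma sum_cpt (k l m : ℕ) (hk : k < m) (hl : l < m) {r : ℝ} (h0 : 0 < r) :
    ∑ j ∈ Finset.range m, ((cpt m j r)⁻¹ ^ k * cpt m j r ^ l)
      = if l = k then (m : ℂ) else 0 := by
  have hr : (r : ℂ) ≠ 0 := by exact_mod_cast h0.ne'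
  have hz : zeta m ≠ 0 := zeta_ne_zero m
  have hm : 0 < m := lt_of_le_of_lt (Nat.zero_le _) hk
  have hterm : ∀ j, (cpt m j r)⁻¹ ^ k * cpt m j r ^ l
      = ((r : ℂ) ^ l * ((r : ℂ) ^ k)⁻¹) * (zeta m ^ l * (zeta m ^ k)⁻¹) ^ j := by
    intro j
    rw [cpt]
    ring
  rw [Finset.sum_congr rfl (fun j _ => hterm j), ← Finset.mul_sum]
  by_cases hlk : l = k
  · subst hlk
    rw [if_pos rfl, mul_inv_cancel₀ (pow_ne_zero _ hr), mul_inv_cancel₀ (pow_ne_zero _ hz),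
      one_mul]
    simp
  · rw [if_neg hlk]
    have hu : zeta m ^ l * (zeta m ^ k)⁻¹ = zeta m ^ ((l : ℤ) - (k : ℤ)) := by
      rw [zpow_sub₀ hz, zpow_natCast, zpow_natCast, div_eq_mul_inv]
    have hdvd : ¬ (m : ℤ) ∣ ((l : ℤ) - (k : ℤ)) := by
      intro hd
      have h1 : ((l : ℤ) - (k : ℤ)).natAbs ≠ 0 := by
        simp only [ne_eq, Int.natAbs_eq_zero, sub_eq_zero]
        exact_mod_cast fun h => hlk (by exact_mod_cast h)
      have h2 : m ∣ ((l : ℤ) - (k : ℤ)).natAbs := by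
        have := Int.natAbs_dvd_natAbs.mpr hd
        simpa using this
      have h3 := Nat.le_of_dvd (Nat.pos_of_ne_zero h1) h2
      omega
    have hne : zeta m ^ l * (zeta m ^ k)⁻¹ ≠ 1 := by
      rw [hu]; exact zeta_zpow_ne_one m hm _ hdvd
    have hum : (zeta m ^ l * (zeta m ^ k)⁻¹) ^ m = 1 := by
      rw [mul_pow, inv_pow, ← pow_mul, ← pow_mul, mul_comm l m, mul_comm k m, pow_mul,
        pow_mul, zeta_pow_m m hm, one_pow, one_pow, inv_one, mul_one]
    rw [geom_sum_eq hne, hum, sub_self, zero_div, mul_zero]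

def avg (k m : ℕ) {r : ℝ} (h0 : 0 < r) (h1 : r < 1) (g : C(CBall d, ℂ)) : C(CBall d, ℂ) :=
  (m : ℂ)⁻¹ • ∑ j ∈ Finset.range m,
    (cpt m j r)⁻¹ ^ k • dilateFn d (cpt m j r)
      (by rw [norm_cpt m j h0.le]; exact h1.le) g

lemma avg_sub (k m : ℕ) {r : ℝ} (h0 : 0 < r) (h1 : r < 1) (g h : C(CBall d, ℂ)) :
    avg k m h0 h1 (g - h) = avg k m h0 h1 g - avg k m h0 h1 h := by
  simp only [avg, dilateFn_sub, smul_sub, Finset.sum_sub_distrib]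

lemma norm_avg_le (k : ℕ) {m : ℕ} (hm : 1 ≤ m) {r : ℝ} (h0 : 0 < r) (h1 : r < 1)
    (g : C(CBall d, ℂ)) : ‖avg k m h0 h1 g‖ ≤ (r ^ k)⁻¹ * ‖g‖ := by
  rw [avg, norm_smul]
  have hb : ∀ j ∈ Finset.range m,
      ‖(cpt m j r)⁻¹ ^ k • dilateFn d (cpt m j r)
        (by rw [norm_cpt m j h0.le]; exact h1.le) g‖ ≤ (r ^ k)⁻¹ * ‖g‖ := by
    intro j _
    rw [norm_smul, norm_pow]
    calc ‖(cpt m j r)⁻¹‖ ^ k * ‖dilateFn d (cpt m j r)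
          (by rw [norm_cpt m j h0.le]; exact h1.le) g‖
        ≤ ‖(cpt m j r)⁻¹‖ ^ k * ‖g‖ :=
          mul_le_mul_of_nonneg_left (norm_dilateFn_le _ _ _) (by positivity)
      _ = (r ^ k)⁻¹ * ‖g‖ := by rw [norm_inv, norm_cpt m j h0.le, inv_pow]
  have h2 := (norm_sum_le _ _).trans (Finset.sum_le_card_nsmul _ _ _ hb)
  have h3 : ‖((m : ℕ) : ℂ)⁻¹‖ = ((m : ℝ))⁻¹ := by
    rw [norm_inv]
    norm_cast
  calc ‖((m : ℕ) : ℂ)⁻¹‖ * ‖∑ j ∈ Finset.range m, _‖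
      ≤ ((m : ℝ))⁻¹ * ((Finset.range m).card • ((r ^ k)⁻¹ * ‖g‖)) := by
        rw [h3]; exact mul_le_mul_of_nonneg_left h2 (by positivity)
    _ = (r ^ k)⁻¹ * ‖g‖ := by
        rw [Finset.card_range, nsmul_eq_mul]
        have hm' : (m : ℝ) ≠ 0 := by positivity
        field_simp

lemma avg_polyMap (k : ℕ) {r : ℝ} (h0 : 0 < r) (h1 : r < 1) (p : MvPolynomial (Fin d) ℂ)
    {m : ℕ} (hd' : p.totalDegree < m) (hk : k < m) :
    avg k m h0 h1 (polyMap d p) = polyMap d (homogeneousComponent k p) := by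
  have hm : 0 < m := lt_of_le_of_lt (Nat.zero_le _) hk
  rw [avg]
  have h2 : ∀ j ∈ Finset.range m,
      (cpt m j r)⁻¹ ^ k • dilateFn d (cpt m j r)
          (by rw [norm_cpt m j h0.le]; exact h1.le) (polyMap d p)
        = ∑ l ∈ Finset.range m, ((cpt m j r)⁻¹ ^ k * cpt m j r ^ l)
            • polyMap d (homogeneousComponent l p) := by
    intro j _
    rw [dilate_polyMap_expand p _ _ hd', Finset.smul_sum]
    exact Finset.sum_congr rfl fun l _ => smul_smul _ _ _
  rw [Finset.sum_congr rfl h2, Finset.sum_comm]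
  have h3 : ∀ l ∈ Finset.range m,
      (∑ j ∈ Finset.range m, ((cpt m j r)⁻¹ ^ k * cpt m j r ^ l)
          • polyMap d (homogeneousComponent l p))
        = (if l = k then ((m : ℕ) : ℂ) else 0) • polyMap d (homogeneousComponent l p) := by
    intro l hl
    rw [← Finset.sum_smul, sum_cpt k l m hk (Finset.mem_range.mp hl) h0]
  rw [Finset.sum_congr rfl h3]
  have h4 : ∀ l ∈ Finset.range m,
      (if l = k then ((m : ℕ) : ℂ) else 0) • polyMap d (homogeneousComponent l p)
        = if l = k then ((m : ℕ) : ℂ) • polyMap d (homogeneousComponent l p) else 0 := by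
    intro l _
    split <;> simp
  rw [Finset.sum_congr rfl h4, Finset.sum_ite_eq' (Finset.range m) k]
  rw [if_pos (Finset.mem_range.mpr hk), smul_smul,
    inv_mul_cancel₀ (by exact_mod_cast hm.ne' : ((m : ℕ) : ℂ) ≠ 0), one_smul]

instance (k : ℕ) : FiniteDimensional ℂ (homogeneousSubmodule (Fin d) ℂ k) := by
  have hle : homogeneousSubmodule (Fin d) ℂ k ≤ restrictTotalDegree (Fin d) ℂ k := by
    intro p hp
    rw [mem_restrictTotalDegree]
    exact ((mem_homogeneousSubmodule k p).mp hp).totalDegree_le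
  exact Submodule.finiteDimensional_of_le hle

lemma isClosed_Hk (k : ℕ) :
    IsClosed (((homogeneousSubmodule (Fin d) ℂ k).map (polyMap d).toLinearMap :
      Submodule ℂ C(CBall d, ℂ)) : Set C(CBall d, ℂ)) :=
  Submodule.closed_of_finiteDimensional _

lemma cauchySeq_of_lipschitz {u v : ℕ → C(CBall d, ℂ)} (K : ℝ) (hK : 0 ≤ K)
    (hb : ∀ n n', ‖u n - u n'‖ ≤ K * ‖v n - v n'‖) (hv : CauchySeq v) : CauchySeq u := by
  rw [Metric.cauchySeq_iff] at hv ⊢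
  intro ε hε
  obtain ⟨N, hN⟩ := hv (ε / (K + 1)) (by positivity)
  refine ⟨N, fun a ha b hb' => ?_⟩
  have h1 := hb a b
  have h2 : ‖v a - v b‖ < ε / (K + 1) := by
    rw [← dist_eq_norm]; exact hN a ha b hb'
  rw [dist_eq_norm]
  have h3 : K * ‖v a - v b‖ ≤ K * (ε / (K + 1)) := mul_le_mul_of_nonneg_left h2.le hK
  have h4 : K * (ε / (K + 1)) < ε := by
    rw [mul_div_assoc', div_lt_iff₀ (by positivity : (0:ℝ) < K + 1)]
    nlinarith
  linarith

lemma exists_comp (k : ℕ) (g : C(CBall d, ℂ)) (hg : g ∈ ballAlg d) :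
    ∃ q ∈ homogeneousSubmodule (Fin d) ℂ k,
      ∀ (r : ℝ) (h0 : 0 < r) (h1 : r < 1),
        Filter.Tendsto (fun m => avg k m h0 h1 g) Filter.atTop (nhds (polyMap d q)) := by
  obtain ⟨v, hvmem, hvlim⟩ := mem_closure_iff_seq_limit.mp hg
  choose p hp using hvmem
  have hvlim' : Filter.Tendsto (fun n => polyMap d (p n)) Filter.atTop (nhds g) := by
    simp only [hp]; exact hvlim
  have half0 : (0:ℝ) < 1/2 := by norm_num
  have half1 : (1:ℝ)/2 < 1 := by norm_num
  have hbd : ∀ n n', ‖polyMap d (homogeneousComponent k (p n))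
        - polyMap d (homogeneousComponent k (p n'))‖
      ≤ ((1/2:ℝ) ^ k)⁻¹ * ‖polyMap d (p n) - polyMap d (p n')‖ := by
    intro n n'
    have hmn : (p n).totalDegree < max (max (p n).totalDegree (p n').totalDegree) k + 1 := by
      omega
    have hmn' : (p n').totalDegree < max (max (p n).totalDegree (p n').totalDegree) k + 1 := by
      omega
    have hkk : k < max (max (p n).totalDegree (p n').totalDegree) k + 1 := by omega
    have heq : avg k (max (max (p n).totalDegree (p n').totalDegree) k + 1) half0 half1
          (polyMap d (p n) - polyMap d (p n'))
        = polyMap d (homogeneousComponent k (p n))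
            - polyMap d (homogeneousComponent k (p n')) := by
      rw [avg_sub, avg_polyMap k half0 half1 _ hmn hkk, avg_polyMap k half0 half1 _ hmn' hkk]
    rw [← heq]
    exact norm_avg_le k (by omega) half0 half1 _
  have hcauchy : CauchySeq (fun n => polyMap d (homogeneousComponent k (p n))) :=
    cauchySeq_of_lipschitz _ (by positivity) hbd hvlim'.cauchySeq
  obtain ⟨h, hh⟩ := cauchySeq_tendsto_of_complete hcauchy
  have hmemH : h ∈ (homogeneousSubmodule (Fin d) ℂ k).map (polyMap d).toLinearMap := by
    refine (isClosed_Hk k).mem_of_tendsto hh (Filter.Eventually.of_forall fun n => ?_)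
    exact Submodule.mem_map_of_mem
      ((mem_homogeneousSubmodule _ _).mpr (homogeneousComponent_isHomogeneous k (p n)))
  obtain ⟨q, hq1, hq2⟩ := hmemH
  have hq2' : polyMap d q = h := hq2
  refine ⟨q, hq1, ?_⟩
  intro r h0 h1
  rw [Metric.tendsto_atTop]
  intro ε hε
  have hδ0 : 0 < ε / (2 * ((r ^ k)⁻¹ + 1)) := by positivity
  obtain ⟨N1, hN1⟩ := (Metric.tendsto_atTop.mp hvlim') _ hδ0
  obtain ⟨N2, hN2⟩ := (Metric.tendsto_atTop.mp hh) _ hδ0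
  set n := max N1 N2 with hn
  have hn1 : dist (polyMap d (p n)) g < ε / (2 * ((r ^ k)⁻¹ + 1)) := hN1 n (le_max_left _ _)
  have hn2 : dist (polyMap d (homogeneousComponent k (p n))) h < ε / (2 * ((r ^ k)⁻¹ + 1)) :=
    hN2 n (le_max_right _ _)
  refine ⟨max (p n).totalDegree k + 1, fun m hm => ?_⟩
  have hdm : (p n).totalDegree < m := by omega
  have hkm : k < m := by omega
  have hsplit : avg k m h0 h1 g - polyMap d q
      = avg k m h0 h1 (g - polyMap d (p n))
        + (polyMap d (homogeneousComponent k (p n)) - h) := by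
    have h7 : avg k m h0 h1 (g - polyMap d (p n))
        = avg k m h0 h1 g - polyMap d (homogeneousComponent k (p n)) := by
      rw [avg_sub, avg_polyMap k h0 h1 _ hdm hkm]
    rw [h7, hq2']
    abel
  rw [dist_eq_norm, hsplit]
  calc ‖avg k m h0 h1 (g - polyMap d (p n))
        + (polyMap d (homogeneousComponent k (p n)) - h)‖
      ≤ ‖avg k m h0 h1 (g - polyMap d (p n))‖
        + ‖polyMap d (homogeneousComponent k (p n)) - h‖ := norm_add_le _ _
    _ ≤ (r ^ k)⁻¹ * ‖g - polyMap d (p n)‖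
        + ‖polyMap d (homogeneousComponent k (p n)) - h‖ := by
        have := norm_avg_le k (by omega : 1 ≤ m) h0 h1 (g - polyMap d (p n))
        linarith
    _ < (r ^ k)⁻¹ * (ε / (2 * ((r ^ k)⁻¹ + 1))) + ε / (2 * ((r ^ k)⁻¹ + 1)) := by
        have hgp : ‖g - polyMap d (p n)‖ < ε / (2 * ((r ^ k)⁻¹ + 1)) := by
          rw [← dist_eq_norm, dist_comm]; exact hn1
        have hpos : (0:ℝ) < (r ^ k)⁻¹ := by positivity
        have h8 : ‖polyMap d (homogeneousComponent k (p n)) - h‖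
            < ε / (2 * ((r ^ k)⁻¹ + 1)) := by
          rw [← dist_eq_norm]; exact hn2
        nlinarith
    _ ≤ ε := by
        have hC : (0:ℝ) < (r ^ k)⁻¹ + 1 := by positivity
        have heq : (r ^ k)⁻¹ * (ε / (2 * ((r ^ k)⁻¹ + 1))) + ε / (2 * ((r ^ k)⁻¹ + 1))
            = ε / 2 := by field_simp
        linarith

lemma norm_comp_le {k : ℕ} {g h : C(CBall d, ℂ)}
    (hlim : ∀ (r : ℝ) (h0 : 0 < r) (h1 : r < 1),
      Filter.Tendsto (fun m => avg k m h0 h1 g) Filter.atTop (nhds h)) :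
    ‖h‖ ≤ ‖g‖ := by
  have key : ∀ (r : ℝ), 0 < r → r < 1 → ‖h‖ ≤ (r ^ k)⁻¹ * ‖g‖ := by
    intro r h0 h1
    refine le_of_tendsto (hlim r h0 h1).norm ?_
    exact Filter.eventually_atTop.mpr ⟨1, fun m hm => norm_avg_le k hm h0 h1 g⟩
  have hseq : Filter.Tendsto (fun j : ℕ => ((1 - 1/(j+2) : ℝ) ^ k)⁻¹ * ‖g‖)
      Filter.atTop (nhds ‖g‖) := by
    have h2 : Filter.Tendsto (fun j : ℕ => (1/(j+2) : ℝ)) Filter.atTop (nhds 0) := by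
      have h3 := (tendsto_one_div_add_atTop_nhds_zero_nat (𝕜 := ℝ)).comp (Filter.tendsto_add_atTop_nat 1)
      have h4 : ((fun n : ℕ => 1/((n:ℝ)+1)) ∘ fun a => a + 1)
          = fun j : ℕ => (1/(j+2) : ℝ) := by
        funext j; simp [Function.comp]; push_cast; ring_nf
      rwa [h4] at h3
    have h1 : Filter.Tendsto (fun j : ℕ => (1 - 1/(j+2) : ℝ)) Filter.atTop (nhds 1) := by
      simpa using tendsto_const_nhds.sub h2
    have h5 : Filter.Tendsto (fun j : ℕ => ((1 - 1/(j+2) : ℝ) ^ k)) Filter.atTop (nhds 1) := by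
      simpa using h1.pow k
    have h6 := h5.inv₀ one_ne_zero
    simpa using h6.mul_const ‖g‖
  refine ge_of_tendsto hseq (Filter.Eventually.of_forall fun j => ?_)
  have hj2 : (1:ℝ)/(j+2) ≤ 1/2 := by
    apply div_le_div_of_nonneg_left (by norm_num) (by norm_num)
    · push_cast; linarith [Nat.cast_nonneg (α := ℝ) j]
  have hj0 : (0:ℝ) < 1 - 1/(j+2) := by linarith
  have hj1 : (1 - 1/(j+2) : ℝ) < 1 := by
    have : (0:ℝ) < 1/(j+2) := by positivity
    linarith
  exact key _ hj0 hj1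

lemma le_add_all_pos {a b : ℝ} (h : ∀ ε : ℝ, 0 < ε → a ≤ b + ε) : a ≤ b := by
  by_contra h'
  push_neg at h'
  have := h ((a - b)/2) (by linarith)
  linarith

lemma geom_le {ρ : ℝ} (h0 : 0 ≤ ρ) (h1 : ρ < 1) (n : ℕ) :
    ∑ i ∈ Finset.range n, ρ ^ i ≤ (1 - ρ)⁻¹ := by
  rw [geom_sum_eq h1.ne n]
  have hρn0 : (0:ℝ) ≤ ρ ^ n := by positivity
  have hρn1 : ρ ^ n ≤ 1 := pow_le_one₀ h0 h1.le
  have h2 : (ρ ^ n - 1)/(ρ - 1) = (1 - ρ ^ n)/(1 - ρ) := by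
    rw [← neg_div_neg_eq]; ring_nf
  rw [h2, ← one_div]
  gcongr
  · linarith

lemma geom_Ico_le {ρ : ℝ} (h0 : 0 ≤ ρ) (h1 : ρ < 1) (n n' : ℕ) :
    ∑ l ∈ Finset.Ico n n', ρ ^ l ≤ ρ ^ n * (1 - ρ)⁻¹ := by
  rw [Finset.sum_Ico_eq_sum_range]
  have h3 : ∀ i ∈ Finset.range (n' - n), ρ ^ (n + i) = ρ ^ n * ρ ^ i :=
    fun i _ => pow_add ρ n i
  rw [Finset.sum_congr rfl h3, ← Finset.mul_sum]
  exact mul_le_mul_of_nonneg_left (geom_le h0 h1 _) (by positivity)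

lemma exists_dilate_close (g : C(CBall d, ℂ)) {ε : ℝ} (hε : 0 < ε) :
    ∃ ρ : ℝ, 0 < ρ ∧ ρ < 1 ∧
      ∀ htc : ‖((ρ : ℝ) : ℂ)‖ ≤ 1, ‖g - dilateFn d ((ρ : ℝ) : ℂ) htc g‖ ≤ ε := by
  have hu : UniformContinuous g := CompactSpace.uniformContinuous_of_continuous g.continuous
  rw [Metric.uniformContinuous_iff] at hu
  obtain ⟨δ, hδ0, hδ⟩ := hu ε hε
  refine ⟨max (1/2) (1 - δ/2), lt_of_lt_of_le (by norm_num) (le_max_left _ _),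
    max_lt (by norm_num) (by linarith), ?_⟩
  intro htc
  set ρ := max (1/2) (1 - δ/2) with hρdef
  have hρ1 : ρ ≤ 1 := (max_lt (by norm_num) (by linarith)).le
  have hρge : 1 - δ/2 ≤ ρ := le_max_right _ _
  refine (ContinuousMap.norm_le _ hε.le).mpr fun z => ?_
  have hdist : dist z (dilatePt d ((ρ : ℝ) : ℂ) htc z) < δ := by
    rw [Subtype.dist_eq]
    have hpt : ((dilatePt d ((ρ : ℝ) : ℂ) htc z : CBall d) : Cd d)
        = ((ρ : ℝ) : ℂ) • (z : Cd d) := rfl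
    rw [hpt, dist_eq_norm]
    have h2 : (z : Cd d) - ((ρ : ℝ) : ℂ) • (z : Cd d)
        = ((1 : ℂ) - ((ρ : ℝ) : ℂ)) • (z : Cd d) := by
      rw [sub_smul, one_smul]
    rw [h2, norm_smul]
    have h3 : ‖(1 : ℂ) - ((ρ : ℝ) : ℂ)‖ = 1 - ρ := by
      rw [show (1 : ℂ) - ((ρ : ℝ) : ℂ) = ((1 - ρ : ℝ) : ℂ) by push_cast; ring,
        Complex.norm_real, Real.norm_of_nonneg (by linarith)]
    rw [h3]
    have h4 : ‖(z : Cd d)‖ ≤ 1 := mem_closedBall_zero_iff.mp z.2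
    calc (1 - ρ) * ‖(z : Cd d)‖ ≤ (1 - ρ) * 1 := by
          have : (0:ℝ) ≤ 1 - ρ := by linarith
          exact mul_le_mul_of_nonneg_left h4 this
      _ ≤ δ/2 := by linarith
      _ < δ := by linarith
  have h5 := hδ hdist
  rw [ContinuousMap.sub_apply, dilateFn_apply, ← dist_eq_norm]
  exact h5.le

lemma abel_bound {g : C(CBall d, ℂ)} (hg : g ∈ ballAlg d) {Q : ℕ → MvPolynomial (Fin d) ℂ}
    (hQ : ∀ k (r : ℝ) (h0 : 0 < r) (h1 : r < 1),
      Filter.Tendsto (fun m => avg k m h0 h1 g) Filter.atTop (nhds (polyMap d (Q k))))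
    {ρ : ℝ} (h0 : 0 < ρ) (h1 : ρ < 1) (htc : ‖((ρ : ℝ) : ℂ)‖ ≤ 1) (n : ℕ) :
    ‖dilateFn d ((ρ : ℝ) : ℂ) htc g
        - ∑ k ∈ Finset.range n, ((ρ : ℝ) : ℂ) ^ k • polyMap d (Q k)‖
      ≤ ‖g‖ * ρ ^ n * (1 - ρ)⁻¹ := by
  have hc0 : (0:ℝ) < (1 - ρ)⁻¹ := by
    have : (0:ℝ) < 1 - ρ := by linarith
    positivity
  refine le_add_all_pos fun ε hε => ?_
  have hδ0 : 0 < ε / (1 + 2 * (1 - ρ)⁻¹) := by positivity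
  obtain ⟨b, hbmem, hbdist⟩ := Metric.mem_closure_iff.mp hg _ hδ0
  obtain ⟨w, rfl⟩ := hbmem
  set δ := ε / (1 + 2 * (1 - ρ)⁻¹) with hδdef
  have hgw : ‖g - polyMap d w‖ < δ := by rw [← dist_eq_norm]; exact hbdist
  set n' := max n (w.totalDegree + 1) with hn'
  have hdn' : w.totalDegree < n' := lt_of_lt_of_le (Nat.lt_succ_self _) (le_max_right _ _)
  have hDw : dilateFn d ((ρ : ℝ) : ℂ) htc (polyMap d w)
      = ∑ l ∈ Finset.range n', ((ρ : ℝ) : ℂ) ^ l • polyMap d (homogeneousComponent l w) :=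
    dilate_polyMap_expand w _ _ hdn'
  have hQw : ∀ k (r : ℝ) (hr0 : 0 < r) (hr1 : r < 1),
      Filter.Tendsto (fun m => avg k m hr0 hr1 (polyMap d w)) Filter.atTop
        (nhds (polyMap d (homogeneousComponent k w))) := by
    intro k r hr0 hr1
    refine tendsto_atTop_of_eventually_const (i₀ := max w.totalDegree k + 1) fun m hm => ?_
    exact avg_polyMap k hr0 hr1 w (by omega) (by omega)
  have hcd : ∀ k, ‖polyMap d (Q k) - polyMap d (homogeneousComponent k w)‖
      ≤ ‖g - polyMap d w‖ := by
    intro k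
    refine norm_comp_le (k := k) ?_
    intro r hr0 hr1
    have h6 := (hQ k r hr0 hr1).sub (hQw k r hr0 hr1)
    have heq : (fun m => avg k m hr0 hr1 g - avg k m hr0 hr1 (polyMap d w))
        = fun m => avg k m hr0 hr1 (g - polyMap d w) :=
      funext fun m => (avg_sub k m hr0 hr1 _ _).symm
    rwa [heq] at h6
  have hcw : ∀ l, ‖polyMap d (homogeneousComponent l w)‖ ≤ ‖polyMap d w‖ :=
    fun l => norm_comp_le (hQw l)
  have hsplit : dilateFn d ((ρ : ℝ) : ℂ) htc g
        - ∑ k ∈ Finset.range n, ((ρ : ℝ) : ℂ) ^ k • polyMap d (Q k)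
      = dilateFn d ((ρ : ℝ) : ℂ) htc (g - polyMap d w)
        + (∑ k ∈ Finset.range n, ((ρ : ℝ) : ℂ) ^ k
            • (polyMap d (homogeneousComponent k w) - polyMap d (Q k)))
        + ∑ l ∈ Finset.Ico n n', ((ρ : ℝ) : ℂ) ^ l • polyMap d (homogeneousComponent l w) := by
    rw [dilateFn_sub, hDw]
    have hr : ∑ l ∈ Finset.range n', ((ρ : ℝ) : ℂ) ^ l • polyMap d (homogeneousComponent l w)
        = (∑ l ∈ Finset.range n, ((ρ : ℝ) : ℂ) ^ l • polyMap d (homogeneousComponent l w))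
          + ∑ l ∈ Finset.Ico n n', ((ρ : ℝ) : ℂ) ^ l
              • polyMap d (homogeneousComponent l w) := by
      rw [Finset.range_eq_Ico, Finset.range_eq_Ico]
      exact (Finset.sum_Ico_consecutive (fun l => ((ρ : ℝ) : ℂ) ^ l • polyMap d (homogeneousComponent l w)) (Nat.zero_le n)
        (le_max_left n (w.totalDegree + 1))).symm
    rw [hr]
    have hs2 : ∑ k ∈ Finset.range n, ((ρ : ℝ) : ℂ) ^ k
          • (polyMap d (homogeneousComponent k w) - polyMap d (Q k))
        = (∑ k ∈ Finset.range n, ((ρ : ℝ) : ℂ) ^ k • polyMap d (homogeneousComponent k w))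
          - ∑ k ∈ Finset.range n, ((ρ : ℝ) : ℂ) ^ k • polyMap d (Q k) := by
      rw [← Finset.sum_sub_distrib]
      exact Finset.sum_congr rfl fun k _ => smul_sub _ _ _
    rw [hs2]
    abel
  rw [hsplit]
  have hnp : ∀ k : ℕ, ‖((ρ : ℝ) : ℂ) ^ k‖ = ρ ^ k := by
    intro k
    rw [norm_pow, Complex.norm_real, Real.norm_of_nonneg h0.le]
  have hA : ‖dilateFn d ((ρ : ℝ) : ℂ) htc (g - polyMap d w)‖ ≤ δ :=
    (norm_dilateFn_le _ _ _).trans hgw.le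
  have hB : ‖∑ k ∈ Finset.range n, ((ρ : ℝ) : ℂ) ^ k
        • (polyMap d (homogeneousComponent k w) - polyMap d (Q k))‖ ≤ δ * (1 - ρ)⁻¹ := by
    refine (norm_sum_le _ _).trans ?_
    have hterm : ∀ k ∈ Finset.range n, ‖((ρ : ℝ) : ℂ) ^ k
          • (polyMap d (homogeneousComponent k w) - polyMap d (Q k))‖ ≤ δ * ρ ^ k := by
      intro k _
      rw [norm_smul, hnp k]
      have h7 : ‖polyMap d (homogeneousComponent k w) - polyMap d (Q k)‖ ≤ δ := by
        rw [norm_sub_rev]; exact (hcd k).trans hgw.le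
      calc ρ ^ k * ‖polyMap d (homogeneousComponent k w) - polyMap d (Q k)‖
          ≤ ρ ^ k * δ := mul_le_mul_of_nonneg_left h7 (by positivity)
        _ = δ * ρ ^ k := by ring
    refine (Finset.sum_le_sum hterm).trans ?_
    rw [← Finset.mul_sum]
    exact mul_le_mul_of_nonneg_left (geom_le h0.le h1 n) hδ0.le
  have hC : ‖∑ l ∈ Finset.Ico n n', ((ρ : ℝ) : ℂ) ^ l
        • polyMap d (homogeneousComponent l w)‖
      ≤ ‖polyMap d w‖ * (ρ ^ n * (1 - ρ)⁻¹) := by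
    refine (norm_sum_le _ _).trans ?_
    have hterm : ∀ l ∈ Finset.Ico n n', ‖((ρ : ℝ) : ℂ) ^ l
          • polyMap d (homogeneousComponent l w)‖ ≤ ‖polyMap d w‖ * ρ ^ l := by
      intro l _
      rw [norm_smul, hnp l]
      calc ρ ^ l * ‖polyMap d (homogeneousComponent l w)‖
          ≤ ρ ^ l * ‖polyMap d w‖ := mul_le_mul_of_nonneg_left (hcw l) (by positivity)
        _ = ‖polyMap d w‖ * ρ ^ l := by ring
    refine (Finset.sum_le_sum hterm).trans ?_
    rw [← Finset.mul_sum]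
    exact mul_le_mul_of_nonneg_left (geom_Ico_le h0.le h1 n n') (norm_nonneg _)
  have hw : ‖polyMap d w‖ ≤ ‖g‖ + δ := by
    have h8 : ‖polyMap d w‖ - ‖g‖ ≤ ‖polyMap d w - g‖ := norm_sub_norm_le _ _
    rw [norm_sub_rev] at h8
    linarith
  have htot := norm_add₃_le.trans (add_le_add (add_le_add hA hB) hC)
  have hρn0 : (0:ℝ) ≤ ρ ^ n := by positivity
  have hρn1 : ρ ^ n ≤ 1 := pow_le_one₀ h0.le h1.le
  have hCw : ‖polyMap d w‖ * (ρ ^ n * (1 - ρ)⁻¹) ≤ (‖g‖ + δ) * (ρ ^ n * (1 - ρ)⁻¹) :=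
    mul_le_mul_of_nonneg_right hw (by positivity)
  have hexp : (‖g‖ + δ) * (ρ ^ n * (1 - ρ)⁻¹)
      = ‖g‖ * ρ ^ n * (1 - ρ)⁻¹ + δ * (ρ ^ n * (1 - ρ)⁻¹) := by ring
  have h9 : δ * (ρ ^ n * (1 - ρ)⁻¹) ≤ δ * (1 - ρ)⁻¹ := by
    have : ρ ^ n * (1 - ρ)⁻¹ ≤ (1 - ρ)⁻¹ := by
      calc ρ ^ n * (1 - ρ)⁻¹ ≤ 1 * (1 - ρ)⁻¹ := mul_le_mul_of_nonneg_right hρn1 hc0.le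
        _ = (1 - ρ)⁻¹ := one_mul _
    exact mul_le_mul_of_nonneg_left this hδ0.le
  have hden : (0:ℝ) < 1 + 2 * (1 - ρ)⁻¹ := by positivity
  have hkey : δ * (1 + 2 * (1 - ρ)⁻¹) = ε := by
    rw [hδdef]; exact div_mul_cancel₀ ε hden.ne'
  nlinarith [htot, hCw, hexp, h9, hδ0.le]

lemma eval_smul_decomp (p : MvPolynomial (Fin d) ℂ) (t : ℂ) (x : Fin d → ℂ) :
    eval (t • x) p = ∑ k ∈ Finset.range (p.totalDegree + 1),
      t ^ k * eval x (homogeneousComponent k p) := by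
  conv_lhs => rw [← sum_homogeneousComponent p]
  rw [map_sum]
  exact Finset.sum_congr rfl fun k _ =>
    eval_smul_of_isHomogeneous (homogeneousComponent_isHomogeneous k p) t x

section Jlemmas

variable {J : Set C(CBall d, ℂ)}

lemma mem_J_smul (hJ : IsIdealOfBallAlg d J) (c : ℂ) {g : C(CBall d, ℂ)} (hg : g ∈ J) :
    c • g ∈ J := by
  have h1 : polyMap d (C c) ∈ ballAlg d := subset_closure ⟨C c, rfl⟩
  have h2 := hJ.2.2.2 g hg _ h1
  have h3 : polyMap d (C c) * g = c • g := by
    have h4 : polyMap d (C c) = algebraMap ℂ C(CBall d, ℂ) c := by rw [polyMap, aeval_C]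
    rw [h4, ← Algebra.smul_def]
  rwa [h3] at h2

lemma mem_J_sum (hJ : IsIdealOfBallAlg d J) {ι : Type} (s : Finset ι)
    (F : ι → C(CBall d, ℂ)) (hF : ∀ i ∈ s, F i ∈ J) : (∑ i ∈ s, F i) ∈ J := by
  classical
  induction s using Finset.induction_on with
  | empty => simpa using hJ.2.1
  | @insert a s hnot ih =>
      rw [Finset.sum_insert hnot]
      exact hJ.2.2.1 _ (hF _ (Finset.mem_insert_self _ _)) _
        (ih fun i hi => hF i (Finset.mem_insert_of_mem hi))

lemma avg_mem_J (hJ : IsIdealOfBallAlg d J) (hJhom : IsHomogBallIdeal d J)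
    (k m : ℕ) {r : ℝ} (h0 : 0 < r) (h1 : r < 1) {g : C(CBall d, ℂ)} (hg : g ∈ J) :
    avg k m h0 h1 g ∈ J := by
  rw [avg]
  refine mem_J_smul hJ _ (mem_J_sum hJ _ _ fun j _ => mem_J_smul hJ _ ?_)
  have hlt : ‖cpt m j r‖ < 1 := by rw [norm_cpt m j h0.le]; exact h1
  exact hJhom g hg (cpt m j r) hlt

end Jlemmas

end Stmt11

open Stmt11 in
/-- effective radical membership in the ball algebra. For every
closed homogeneous ideal `J` of the ball algebra `B` there is an `N ∈ ℕ` such that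
`f^N ∈ J` whenever `f ∈ √J`, i.e. whenever `f ∈ B` and `f^m ∈ J` for some `m ≥ 1`. -/
theorem stmt11 (d : ℕ) (J : Set C(CBall d, ℂ))
    (hJ : IsIdealOfBallAlg d J) (hJcl : IsClosed J) (hJhom : IsHomogBallIdeal d J) :
    ∃ N : ℕ, ∀ f ∈ ballAlg d, (∃ m : ℕ, 1 ≤ m ∧ f ^ m ∈ J) → f ^ N ∈ J := by
  classical
  have half0 : (0:ℝ) < 1/2 := by norm_num
  have half1 : (1:ℝ)/2 < 1 := by norm_num
  set I : Ideal (MvPolynomial (Fin d) ℂ) :=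
    { carrier := {p | polyMap d p ∈ J}
      add_mem' := fun {a b} ha hb => by
        simp only [Set.mem_setOf_eq, map_add] at *
        exact hJ.2.2.1 _ ha _ hb
      zero_mem' := by
        simp only [Set.mem_setOf_eq, map_zero]
        exact hJ.2.1
      smul_mem' := fun c {p} hp => by
        simp only [Set.mem_setOf_eq, smul_eq_mul, map_mul] at *
        exact hJ.2.2.2 _ hp _ (subset_closure ⟨c, rfl⟩) } with hI
  have hImem : ∀ p : MvPolynomial (Fin d) ℂ, p ∈ I ↔ polyMap d p ∈ J := fun p => Iff.rfl
  obtain ⟨N, hN⟩ := Ideal.exists_radical_pow_le_of_fg I (IsNoetherian.noetherian _)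
  refine ⟨N, ?_⟩
  rintro f hf ⟨m, hm1, hfm⟩
  -- elements of J vanish on the ball part of the zero locus of I
  have hJvan : ∀ g ∈ J, ∀ w : CBall d,
      (∀ p ∈ I, eval (fun i => (w : Cd d) i) p = 0) → g w = 0 := by
    intro g hg w hw
    choose Qg hQgmem hQglim using fun k => exists_comp k g (hJ.1 hg)
    have hQgJ : ∀ k, polyMap d (Qg k) ∈ J := fun k =>
      hJcl.mem_of_tendsto (hQglim k (1/2) half0 half1)
        (Filter.Eventually.of_forall fun mm => avg_mem_J hJ hJhom k mm half0 half1 hg)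
    have hQgw : ∀ k, polyMap d (Qg k) w = 0 := fun k => by
      rw [polyMap_apply]
      exact hw _ ((hImem _).mpr (hQgJ k))
    have hdil : ∀ ρ : ℝ, 0 < ρ → ρ < 1 → ∀ htc : ‖((ρ:ℝ):ℂ)‖ ≤ 1,
        dilateFn d ((ρ:ℝ):ℂ) htc g w = 0 := by
      intro ρ h0 h1 htc
      have hb : ∀ n : ℕ, ‖dilateFn d ((ρ:ℝ):ℂ) htc g w‖ ≤ ‖g‖ * ρ^n * (1-ρ)⁻¹ := by
        intro n
        have h2 := abel_bound (hJ.1 hg) hQglim h0 h1 htc n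
        have h4 : (∑ k ∈ Finset.range n, ((ρ:ℝ):ℂ)^k • polyMap d (Qg k)) w = 0 := by
          rw [ContinuousMap.coe_sum, Finset.sum_apply]
          refine Finset.sum_eq_zero fun k _ => ?_
          rw [ContinuousMap.smul_apply, hQgw k, smul_zero]
        have h3 : dilateFn d ((ρ:ℝ):ℂ) htc g w
            = (dilateFn d ((ρ:ℝ):ℂ) htc g
                - ∑ k ∈ Finset.range n, ((ρ:ℝ):ℂ)^k • polyMap d (Qg k)) w := by
          rw [ContinuousMap.sub_apply, h4, sub_zero]
        rw [h3]
        exact (ContinuousMap.norm_coe_le_norm _ _).trans h2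
      have hlim0 : Filter.Tendsto (fun n : ℕ => ‖g‖ * ρ^n * (1-ρ)⁻¹)
          Filter.atTop (nhds 0) := by
        have h5 := tendsto_pow_atTop_nhds_zero_of_lt_one h0.le h1
        have h6 := (h5.const_mul ‖g‖).mul_const (1-ρ)⁻¹
        simpa using h6
      have h7 : ‖dilateFn d ((ρ:ℝ):ℂ) htc g w‖ ≤ 0 := ge_of_tendsto' hlim0 hb
      exact norm_le_zero_iff.mp h7
    have h8 : ∀ ε : ℝ, 0 < ε → ‖g w‖ ≤ 0 + ε := by
      intro ε hε
      obtain ⟨ρ, h0, h1, hclose⟩ := exists_dilate_close g hε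
      have htc : ‖((ρ:ℝ):ℂ)‖ ≤ 1 := by
        rw [Complex.norm_real, Real.norm_of_nonneg h0.le]; exact h1.le
      have h9 := hdil ρ h0 h1 htc
      rw [zero_add]
      calc ‖g w‖ = ‖(g - dilateFn d ((ρ:ℝ):ℂ) htc g) w‖ := by
            rw [ContinuousMap.sub_apply, h9, sub_zero]
        _ ≤ ‖g - dilateFn d ((ρ:ℝ):ℂ) htc g‖ := ContinuousMap.norm_coe_le_norm _ _
        _ ≤ ε := hclose htc
    exact norm_le_zero_iff.mp (le_add_all_pos h8)
  -- I is homogeneous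
  have hIhom : ∀ p ∈ I, ∀ k : ℕ, homogeneousComponent k p ∈ I := by
    intro p hp k
    have h1 := avg_mem_J hJ hJhom k (max p.totalDegree k + 1) half0 half1
      ((hImem p).mp hp)
    rwa [avg_polyMap k half0 half1 p (by omega) (by omega)] at h1
  -- cone property in eval form
  have hcone : ∀ (x : Fin d → ℂ), (∀ p ∈ I, eval x p = 0) →
      ∀ t : ℂ, ∀ p ∈ I, eval (t • x) p = 0 := by
    intro x hx t p hp
    rw [eval_smul_decomp]
    exact Finset.sum_eq_zero fun k _ => by rw [hx _ (hIhom p hp k), mul_zero]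
  -- f vanishes on the ball part of the zero locus
  have hfvan : ∀ w : CBall d, (∀ p ∈ I, eval (fun i => (w : Cd d) i) p = 0) → f w = 0 := by
    intro w hw
    have h1 := hJvan _ hfm w hw
    rw [ContinuousMap.pow_apply] at h1
    exact pow_eq_zero_iff (by omega) |>.mp h1
  -- components of f
  choose Q hQmem hQlim using fun k => exists_comp k f hf
  have hQrad : ∀ k, Q k ∈ I.radical := by
    intro k
    rw [← vanishingIdeal_zeroLocus_eq_radical (K := ℂ) I]
    rw [mem_vanishingIdeal_iff]
    intro x hx
    have hx' : ∀ p ∈ I, eval x p = 0 := mem_zeroLocus_iff.mp hx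
    set xE : Cd d := WithLp.toLp 2 x with hxE
    set c : ℝ := max ‖xE‖ 1 with hc
    have hc1 : (1:ℝ) ≤ c := le_max_right _ _
    have hc0 : (0:ℝ) < c := lt_of_lt_of_le one_pos hc1
    have hcx : ‖xE‖ ≤ c := le_max_left _ _
    have hwmem : (((c⁻¹ : ℝ)) : ℂ) • xE ∈ CBall d := by
      show (((c⁻¹ : ℝ)) : ℂ) • xE ∈ Metric.closedBall 0 1
      rw [mem_closedBall_zero_iff, norm_smul, Complex.norm_real,
        Real.norm_of_nonneg (by positivity)]
      calc c⁻¹ * ‖xE‖ ≤ c⁻¹ * c := mul_le_mul_of_nonneg_left hcx (by positivity)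
        _ = 1 := inv_mul_cancel₀ hc0.ne'
    set w : CBall d := ⟨(((c⁻¹ : ℝ)) : ℂ) • xE, hwmem⟩ with hwdef
    have hwcoord : (fun i => (w : Cd d) i) = (((c⁻¹ : ℝ)) : ℂ) • x := rfl
    have hwZ : ∀ p ∈ I, eval (fun i => (w : Cd d) i) p = 0 := by
      intro p hp
      rw [hwcoord]
      exact hcone x hx' _ p hp
    have hQkw : polyMap d (Q k) w = 0 := by
      have h2 : Filter.Tendsto (fun mm => (avg k mm half0 half1 f) w)
          Filter.atTop (nhds (polyMap d (Q k) w)) :=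
        ((continuous_eval_const w).tendsto _).comp (hQlim k (1/2) half0 half1)
      have h3 : ∀ mm, (avg k mm half0 half1 f) w = 0 := by
        intro mm
        rw [avg, ContinuousMap.smul_apply, ContinuousMap.coe_sum, Finset.sum_apply]
        have h4 : ∀ j ∈ Finset.range mm,
            ((cpt mm j (1/2))⁻¹ ^ k • dilateFn d (cpt mm j (1/2))
              (by rw [norm_cpt mm j half0.le]; exact half1.le) f) w = 0 := by
          intro j _
          rw [ContinuousMap.smul_apply, dilateFn_apply]
          have h5 : f (dilatePt d (cpt mm j (1/2))
              (by rw [norm_cpt mm j half0.le]; exact half1.le) w) = 0 := by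
            apply hfvan
            intro p hp
            have h6 : (fun i => ((dilatePt d (cpt mm j (1/2))
                (by rw [norm_cpt mm j half0.le]; exact half1.le) w : CBall d) : Cd d) i)
                = cpt mm j (1/2) • (fun i => (w : Cd d) i) := rfl
            rw [h6]
            exact hcone _ hwZ _ p hp
          rw [h5, smul_zero]
        rw [Finset.sum_congr rfl h4, Finset.sum_const_zero, smul_zero]
      have h7 : Filter.Tendsto (fun mm => (avg k mm half0 half1 f) w)
          Filter.atTop (nhds 0) := by
        simp only [h3]
        exact tendsto_const_nhds
      exact tendsto_nhds_unique h2 h7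
    have h9 : x = ((c : ℝ) : ℂ) • (fun i => (w : Cd d) i) := by
      rw [hwcoord]
      funext i
      show x i = ((c : ℝ) : ℂ) * (((c⁻¹ : ℝ) : ℂ) * x i)
      rw [← mul_assoc, ← Complex.ofReal_mul, mul_inv_cancel₀ hc0.ne',
        Complex.ofReal_one, one_mul]
    have hscale : eval x (Q k)
        = ((c : ℝ) : ℂ) ^ k * eval (fun i => (w : Cd d) i) (Q k) := by
      conv_lhs => rw [h9]
      exact eval_smul_of_isHomogeneous ((mem_homogeneousSubmodule _ _).mp (hQmem k)) _ _
    rw [show aeval x (Q k) = eval x (Q k) from rfl, hscale, ← polyMap_apply, hQkw, mul_zero]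
  -- approximation of f by radical polynomials
  have happrox : ∀ ε : ℝ, 0 < ε → ∃ T, T ∈ I.radical ∧ ‖f - polyMap d T‖ ≤ ε := by
    intro ε hε
    obtain ⟨ρ, h0, h1, hclose⟩ := exists_dilate_close f (half_pos hε)
    have htc : ‖((ρ:ℝ):ℂ)‖ ≤ 1 := by
      rw [Complex.norm_real, Real.norm_of_nonneg h0.le]; exact h1.le
    have hlim0 : Filter.Tendsto (fun n : ℕ => ‖f‖ * ρ^n * (1-ρ)⁻¹)
        Filter.atTop (nhds 0) := by
      have h5 := tendsto_pow_atTop_nhds_zero_of_lt_one h0.le h1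
      have h6 := (h5.const_mul ‖f‖).mul_const (1-ρ)⁻¹
      simpa using h6
    rw [Metric.tendsto_atTop] at hlim0
    obtain ⟨n0, hn0⟩ := hlim0 (ε/2) (half_pos hε)
    have hb : ‖f‖ * ρ^n0 * (1-ρ)⁻¹ ≤ ε/2 := by
      have := hn0 n0 le_rfl
      rw [Real.dist_eq, sub_zero] at this
      exact (le_abs_self _).trans this.le
    refine ⟨∑ k ∈ Finset.range n0, C (((ρ:ℝ):ℂ)^k) * Q k, ?_, ?_⟩
    · exact Submodule.sum_mem _ fun k _ => Ideal.mul_mem_left _ _ (hQrad k)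
    · have habel := abel_bound hf hQlim h0 h1 htc n0
      have hCsmul : ∀ (a : ℂ) (q : MvPolynomial (Fin d) ℂ),
          polyMap d (C a * q) = a • polyMap d q := by
        intro a q
        rw [map_mul, show polyMap d (C a) = algebraMap ℂ C(CBall d, ℂ) a from by
          rw [polyMap, aeval_C], ← Algebra.smul_def]
      have hmap : polyMap d (∑ k ∈ Finset.range n0, C (((ρ:ℝ):ℂ)^k) * Q k)
          = ∑ k ∈ Finset.range n0, ((ρ:ℝ):ℂ)^k • polyMap d (Q k) := by
        rw [map_sum]
        exact Finset.sum_congr rfl fun k _ => hCsmul _ _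
      rw [hmap]
      have hsp : f - ∑ k ∈ Finset.range n0, ((ρ:ℝ):ℂ)^k • polyMap d (Q k)
          = (f - dilateFn d ((ρ:ℝ):ℂ) htc f)
            + (dilateFn d ((ρ:ℝ):ℂ) htc f
                - ∑ k ∈ Finset.range n0, ((ρ:ℝ):ℂ)^k • polyMap d (Q k)) := by
        abel
      rw [hsp]
      calc ‖(f - dilateFn d ((ρ:ℝ):ℂ) htc f)
            + (dilateFn d ((ρ:ℝ):ℂ) htc f
                - ∑ k ∈ Finset.range n0, ((ρ:ℝ):ℂ)^k • polyMap d (Q k))‖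
          ≤ ‖f - dilateFn d ((ρ:ℝ):ℂ) htc f‖
            + ‖dilateFn d ((ρ:ℝ):ℂ) htc f
                - ∑ k ∈ Finset.range n0, ((ρ:ℝ):ℂ)^k • polyMap d (Q k)‖ := norm_add_le _ _
        _ ≤ ε/2 + ε/2 := add_le_add (hclose htc) (habel.trans hb)
        _ = ε := by ring
  choose T hTrad hTclose using fun j : ℕ => happrox (1/(j+1)) (by positivity)
  have hTlim : Filter.Tendsto (fun j => polyMap d (T j)) Filter.atTop (nhds f) := by
    rw [tendsto_iff_dist_tendsto_zero]
    refine squeeze_zero (fun j => dist_nonneg) (fun j => ?_)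
      tendsto_one_div_add_atTop_nhds_zero_nat
    rw [dist_eq_norm, norm_sub_rev]
    exact hTclose j
  have hpow : Filter.Tendsto (fun j => (polyMap d (T j))^N) Filter.atTop (nhds (f^N)) :=
    hTlim.pow N
  refine hJcl.mem_of_tendsto hpow (Filter.Eventually.of_forall fun j => ?_)
  have h1 : T j ^ N ∈ I := hN (Ideal.pow_mem_pow (hTrad j) N)
  have h2 : polyMap d (T j ^ N) ∈ J := (hImem _).mp h1
  rwa [map_pow] at h2
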